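/- If a closed disk of radius r in the Euclidean plane is covered by finitely many parallel strips (planks) of widths w₁, …, w_l, then w₁ + … + w_l ≥ 2r. -/

import Mathlib

open MeasureTheory Real Set


 

/-- A plank (strip) of width `w` in direction of the unit vector `u`. -/
def plank (u : EuclideanSpace ℝ (Fin 2)) (a w : ℝ) : Set (EuclideanSpace ℝ (Fin 2)) :=
  {x | a ≤ (inner ℝ x u : ℝ) ∧ (inner ℝ x u : ℝ) ≤ a + w}


lemma moese_cov1d {s : Set ℝ} {f f' : ℝ → ℝ}
    (hs : MeasurableSet s) (hf' : ∀ x ∈ s, HasDerivWithinAt f (f' x) s x)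
    (hf : Set.InjOn f s) (g : ℝ → ENNReal) :
    ∫⁻ x in f '' s, g x = ∫⁻ x in s, ENNReal.ofReal |f' x| * g (f x) := by
  simpa only [ContinuousLinearMap.det_toSpanSingleton] using
    lintegral_image_eq_lintegral_abs_det_fderiv_mul volume hs
      (fun x hx => (hf' x hx).hasFDerivWithinAt) hf g

lemma moese_one_dim (s : ℝ) (hs : 0 < s) :
    ∫⁻ y in Ioo (-s) s, ENNReal.ofReal ((Real.sqrt (s^2 - y^2))⁻¹) = ENNReal.ofReal π := by
  have hpi := Real.pi_pos
  have himg : (fun t => s * Real.sin t) '' Ioo (-(π/2)) (π/2) = Ioo (-s) s := by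
    ext y
    constructor
    · rintro ⟨t, ht, rfl⟩
      have h1 : Real.sin t < 1 := by
        have := Real.strictMonoOn_sin (Set.mem_Icc.2 ⟨ht.1.le, ht.2.le⟩)
          (Set.mem_Icc.2 ⟨by linarith, le_refl (π/2)⟩) ht.2
        simpa using this
      have h2 : -1 < Real.sin t := by
        have := Real.strictMonoOn_sin (Set.mem_Icc.2 ⟨le_refl (-(π/2)), by linarith⟩)
          (Set.mem_Icc.2 ⟨ht.1.le, ht.2.le⟩) ht.1
        simpa using this
      refine ⟨?_, ?_⟩
      · show -s < s * Real.sin t; nlinarith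
      · show s * Real.sin t < s; nlinarith
    · intro hy
      refine ⟨Real.arcsin (y / s), ⟨?_, ?_⟩, ?_⟩
      · exact Real.neg_pi_div_two_lt_arcsin.2 (by rw [lt_div_iff₀ hs]; nlinarith [hy.1])
      · exact Real.arcsin_lt_pi_div_two.2 (by rw [div_lt_iff₀ hs]; nlinarith [hy.2])
      · show s * Real.sin (Real.arcsin (y / s)) = y
        rw [Real.sin_arcsin ((le_div_iff₀ hs).2 (by nlinarith [hy.1])) ((div_le_one hs).2 hy.2.le)]
        field_simp
  have hinj : Set.InjOn (fun t => s * Real.sin t) (Ioo (-(π/2)) (π/2)) := by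
    intro x hx y hy hxy
    exact Real.injOn_sin (Set.mem_Icc.2 ⟨hx.1.le, hx.2.le⟩) (Set.mem_Icc.2 ⟨hy.1.le, hy.2.le⟩)
      (mul_left_cancel₀ (ne_of_gt hs) hxy)
  have hderiv : ∀ t ∈ Ioo (-(π/2)) (π/2), HasDerivWithinAt (fun t => s * Real.sin t)
      (s * Real.cos t) (Ioo (-(π/2)) (π/2)) t := fun t _ =>
    ((Real.hasDerivAt_sin t).const_mul s).hasDerivWithinAt
  rw [← himg, moese_cov1d measurableSet_Ioo hderiv hinj]
  have key : ∀ t ∈ Ioo (-(π/2)) (π/2),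
      ENNReal.ofReal |s * Real.cos t| *
        ENNReal.ofReal ((Real.sqrt (s^2 - (s * Real.sin t)^2))⁻¹) = 1 := by
    intro t ht
    have hcos : 0 < Real.cos t := Real.cos_pos_of_mem_Ioo ht
    have h1 : s^2 - (s * Real.sin t)^2 = (s * Real.cos t)^2 := by
      have := Real.sin_sq_add_cos_sq t
      nlinarith
    rw [h1, Real.sqrt_sq (by positivity), abs_of_pos (by positivity),
      ← ENNReal.ofReal_mul (by positivity), mul_inv_cancel₀ (by positivity), ENNReal.ofReal_one]
  rw [setLIntegral_congr_fun measurableSet_Ioo key]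
  rw [setLIntegral_one, Real.volume_Ioo]
  congr 1
  ring

lemma moese_two_dim (r : ℝ) (hr : 0 < r) (A : Set ℝ) (hA : MeasurableSet A) :
    ∫⁻ p : ℝ × ℝ in {p | p.1 ∈ A ∧ p.1^2 + p.2^2 < r^2},
      ENNReal.ofReal ((Real.sqrt (r^2 - (p.1^2 + p.2^2)))⁻¹)
      = ENNReal.ofReal π * volume (A ∩ Ioo (-r) r) := by
  set g : ℝ × ℝ → ENNReal := fun p => ENNReal.ofReal ((Real.sqrt (r^2 - (p.1^2 + p.2^2)))⁻¹)
    with hg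
  set T : Set (ℝ × ℝ) := {p | p.1 ∈ A ∧ p.1^2 + p.2^2 < r^2} with hT
  have hTm : MeasurableSet T := by
    apply MeasurableSet.inter
    · exact measurable_fst hA
    · exact measurableSet_lt (((continuous_fst.pow 2).add (continuous_snd.pow 2)).measurable) measurable_const
  have hgm : Measurable g := by
    apply Measurable.ennreal_ofReal
    apply Measurable.inv
    fun_prop
  rw [← lintegral_indicator hTm]
  rw [MeasureTheory.Measure.volume_eq_prod ℝ ℝ, lintegral_prod _ ((hgm.indicator hTm).aemeasurable)]
  have inner_eq : ∀ x : ℝ, (∫⁻ y, T.indicator g (x, y))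
      = (A ∩ Ioo (-r) r).indicator (fun _ => ENNReal.ofReal π) x := by
    intro x
    by_cases hx : x ∈ A ∩ Ioo (-r) r
    · rw [Set.indicator_of_mem hx]
      have hx2 : x^2 < r^2 := by
        rcases hx.2 with ⟨h1, h2⟩
        nlinarith
      set s := Real.sqrt (r^2 - x^2) with hs
      have hs2 : s^2 = r^2 - x^2 := Real.sq_sqrt (by nlinarith)
      have hspos : 0 < s := Real.sqrt_pos.2 (by nlinarith)
      have : ∀ y : ℝ, T.indicator g (x, y)
          = (Ioo (-s) s).indicator (fun y => ENNReal.ofReal ((Real.sqrt (s^2 - y^2))⁻¹)) y := by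
        intro y
        have hmem : (x, y) ∈ T ↔ y ∈ Ioo (-s) s := by
          simp only [hT, Set.mem_setOf_eq, Set.mem_Ioo]
          constructor
          · rintro ⟨-, h⟩
            constructor <;> nlinarith [abs_lt.1 (abs_lt_of_sq_lt_sq (by nlinarith : y^2 < s^2) hspos.le)]
          · rintro ⟨h1, h2⟩
            exact ⟨hx.1, by nlinarith⟩
        by_cases hy : (x, y) ∈ T
        · rw [Set.indicator_of_mem hy, Set.indicator_of_mem (hmem.1 hy), hg]
          simp only
          rw [show r ^ 2 - (x ^ 2 + y ^ 2) = s ^ 2 - y ^ 2 by nlinarith]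
        · rw [Set.indicator_of_notMem hy, Set.indicator_of_notMem (fun h => hy (hmem.2 h))]
      rw [funext this, lintegral_indicator measurableSet_Ioo]
      exact moese_one_dim s hspos
    · rw [Set.indicator_of_notMem hx]
      have : ∀ y : ℝ, T.indicator g (x, y) = 0 := by
        intro y
        apply Set.indicator_of_notMem
        intro hmem
        apply hx
        refine ⟨hmem.1, ?_⟩
        have := hmem.2
        simp only [Set.mem_Ioo]
        constructor <;> nlinarith
      simp [this]
  simp_rw [inner_eq]
  rw [lintegral_indicator_const (hA.inter measurableSet_Ioo)]

lemma moese_coordsq (y : EuclideanSpace ℝ (Fin 2)) : (y 0)^2 + (y 1)^2 = ‖y‖^2 := by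
  rw [EuclideanSpace.norm_eq, Real.sq_sqrt (by positivity)]
  simp [Fin.sum_univ_two, sq_abs]

lemma moese_core (c : EuclideanSpace ℝ (Fin 2)) (r : ℝ) (hr : 0 < r)
    (u : EuclideanSpace ℝ (Fin 2)) (hu : ‖u‖ = 1) (a w : ℝ) :
    ∫⁻ x in Metric.ball c r ∩ plank u a w,
      ENNReal.ofReal ((Real.sqrt (r^2 - ‖x - c‖^2))⁻¹)
      = ENNReal.ofReal π *
        volume (Icc (a - (inner ℝ c u : ℝ)) (a + w - (inner ℝ c u : ℝ)) ∩ Ioo (-r) r) := by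
  -- orthonormal basis with b 0 = u
  have hcard : Module.finrank ℝ (EuclideanSpace ℝ (Fin 2)) = Fintype.card (Fin 2) := by
    simp [finrank_euclideanSpace_fin]
  have horth : Orthonormal ℝ (Set.restrict {0} (fun _ : Fin 2 => u)) := by
    constructor
    · intro i; exact hu
    · intro i j hij
      exact absurd (Subtype.ext ((i.2 : (i : Fin 2) ∈ ({0} : Set (Fin 2))).trans
        ((j.2 : (j : Fin 2) ∈ ({0} : Set (Fin 2))).symm))) hij
  obtain ⟨b, hb⟩ := horth.exists_orthonormalBasis_extension_of_card_eq hcard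
  have hb0 : b 0 = u := hb 0 rfl
  set k : ℝ := (inner ℝ c u : ℝ) with hk
  set A : Set ℝ := Icc (a - k) (a + w - k) with hA
  set T : Set (ℝ × ℝ) := {p | p.1 ∈ A ∧ p.1^2 + p.2^2 < r^2} with hT
  set G : EuclideanSpace ℝ (Fin 2) ≃ᵐ ℝ × ℝ :=
    (MeasurableEquiv.subRight c).trans (b.measurableEquiv.trans
      ((MeasurableEquiv.toLp 2 (Fin 2 → ℝ)).symm.trans (MeasurableEquiv.piFinTwo fun _ => ℝ)))
    with hG
  have hGapp : ∀ x, G x = (b.repr (x - c) 0, b.repr (x - c) 1) := fun x => rfl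
  have hGmp : MeasurePreserving G volume volume := by
    exact ((MeasureTheory.volume_preserving_piFinTwo fun _ => ℝ).comp
      ((EuclideanSpace.volume_preserving_symm_measurableEquiv_toLp (Fin 2)).comp
        ((b.measurePreserving_measurableEquiv).comp
          (measurePreserving_sub_right volume c))))
  have hinner : ∀ x : EuclideanSpace ℝ (Fin 2), b.repr (x - c) 0 = (inner ℝ x u : ℝ) - k := by
    intro x
    rw [OrthonormalBasis.repr_apply_apply, hb0, real_inner_comm, inner_sub_left]
  have hnorm : ∀ x : EuclideanSpace ℝ (Fin 2),
      (b.repr (x - c) 0)^2 + (b.repr (x - c) 1)^2 = ‖x - c‖^2 := by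
    intro x
    rw [moese_coordsq, LinearIsometryEquiv.norm_map]
  have hset : Metric.ball c r ∩ plank u a w = G ⁻¹' T := by
    ext x
    constructor
    · rintro ⟨hball, h1, h2⟩
      rw [mem_ball_iff_norm] at hball
      refine Set.mem_preimage.2 ?_
      rw [hGapp]
      refine ⟨?_, ?_⟩
      · show b.repr (x - c) 0 ∈ A
        rw [hinner, hA]
        exact Set.mem_Icc.2 ⟨by linarith, by linarith⟩
      · show (b.repr (x - c) 0)^2 + (b.repr (x - c) 1)^2 < r^2
        rw [hnorm]
        nlinarith [norm_nonneg (x - c)]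
    · intro hx
      have hx' := Set.mem_preimage.1 hx
      rw [hGapp] at hx'
      obtain ⟨hx1, hx2⟩ := hx'
      dsimp only at hx1 hx2
      rw [hinner, hA, Set.mem_Icc] at hx1
      rw [show ((b.repr (x - c) 0)^2 + (b.repr (x - c) 1)^2 : ℝ) = ‖x - c‖^2 from hnorm x] at hx2
      refine ⟨?_, ?_, ?_⟩
      · rw [mem_ball_iff_norm]
        nlinarith [norm_nonneg (x - c)]
      · linarith [hx1.1]
      · linarith [hx1.2]
  have hfun : ∀ x, ENNReal.ofReal ((Real.sqrt (r^2 - ‖x - c‖^2))⁻¹)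
      = (fun p : ℝ × ℝ => ENNReal.ofReal ((Real.sqrt (r^2 - (p.1^2 + p.2^2)))⁻¹)) (G x) := by
    intro x
    simp only [hGapp, hnorm]
  rw [hset]
  calc ∫⁻ x in G ⁻¹' T, ENNReal.ofReal ((Real.sqrt (r^2 - ‖x - c‖^2))⁻¹)
      = ∫⁻ x in G ⁻¹' T,
          (fun p : ℝ × ℝ => ENNReal.ofReal ((Real.sqrt (r^2 - (p.1^2 + p.2^2)))⁻¹)) (G x) := by
        exact lintegral_congr fun x => hfun x
    _ = ∫⁻ p in T, (fun p : ℝ × ℝ => ENNReal.ofReal ((Real.sqrt (r^2 - (p.1^2 + p.2^2)))⁻¹)) p :=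
        hGmp.setLIntegral_comp_preimage_emb G.measurableEmbedding (fun p : ℝ × ℝ => ENNReal.ofReal ((Real.sqrt (r^2 - (p.1^2 + p.2^2)))⁻¹)) T
    _ = ENNReal.ofReal π * volume (A ∩ Ioo (-r) r) := by exact moese_two_dim r hr A measurableSet_Icc

/-- Moese's theorem (Tarski's plank problem for the disk): if a closed disk of
radius `r` is covered by finitely many planks, their total width is at least `2r`. -/
theorem tarski_plank_disk (c : EuclideanSpace ℝ (Fin 2)) (r : ℝ) (hr : 0 < r)
    (l : ℕ) (u : Fin l → EuclideanSpace ℝ (Fin 2)) (a w : Fin l → ℝ)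
    (hu : ∀ i, ‖u i‖ = 1) (hw : ∀ i, 0 ≤ w i)
    (hcov : Metric.closedBall c r ⊆ ⋃ i, plank (u i) (a i) (w i)) :
    2 * r ≤ ∑ i, w i := by
  have hpi := Real.pi_pos
  set f : EuclideanSpace ℝ (Fin 2) → ENNReal :=
    fun x => ENNReal.ofReal ((Real.sqrt (r^2 - ‖x - c‖^2))⁻¹) with hf
  have hmeasf : Measurable f := by
    apply Measurable.ennreal_ofReal
    apply Measurable.inv
    exact (continuous_const.sub ((continuous_id.sub continuous_const).norm.pow 2)).sqrt.measurable
  have hplank_meas : ∀ i, MeasurableSet (plank (u i) (a i) (w i)) := by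
    intro i
    have : plank (u i) (a i) (w i)
        = (fun x : EuclideanSpace ℝ (Fin 2) => (inner ℝ x (u i) : ℝ)) ⁻¹' Icc (a i) (a i + w i) := by
      ext x; simp [plank, Set.mem_Icc]
    rw [this]
    exact (measurableSet_Icc).preimage (continuous_id.inner continuous_const).measurable
  -- total mass of the ball
  set u₀ : EuclideanSpace ℝ (Fin 2) := EuclideanSpace.single 0 (1:ℝ) with hu₀def
  have hu₀ : ‖u₀‖ = 1 := by simp [hu₀def, EuclideanSpace.norm_single]
  have hsub : Metric.ball c r ⊆ plank u₀ ((inner ℝ c u₀ : ℝ) - r) (2*r) := by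
    intro x hx
    rw [mem_ball_iff_norm] at hx
    have h1 : |(inner ℝ (x - c) u₀ : ℝ)| ≤ ‖x - c‖ := by
      have := abs_real_inner_le_norm (x - c) u₀
      rwa [hu₀, mul_one] at this
    rw [inner_sub_left] at h1
    have h2 := abs_lt.1 (lt_of_le_of_lt h1 hx)
    exact ⟨by linarith [h2.1], by linarith [h2.2]⟩
  have htotal : ∫⁻ x in Metric.ball c r, f x = ENNReal.ofReal π * ENNReal.ofReal (2*r) := by
    have heq : Metric.ball c r = Metric.ball c r ∩ plank u₀ ((inner ℝ c u₀ : ℝ) - r) (2*r) :=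
      (Set.inter_eq_left.2 hsub).symm
    rw [heq, moese_core c r hr u₀ hu₀ _ _]
    congr 1
    rw [show (inner ℝ c u₀ : ℝ) - r - (inner ℝ c u₀ : ℝ) = -r by ring,
      show (inner ℝ c u₀ : ℝ) - r + 2*r - (inner ℝ c u₀ : ℝ) = r by ring,
      Set.inter_eq_self_of_subset_right Set.Ioo_subset_Icc_self, Real.volume_Ioo]
    congr 1
    ring
  -- subadditivity
  have hsplit : ∫⁻ x in Metric.ball c r, f x
      ≤ ∑ i, ∫⁻ x in Metric.ball c r ∩ plank (u i) (a i) (w i), f x := by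
    calc ∫⁻ x in Metric.ball c r, f x
        ≤ ∫⁻ x in Metric.ball c r, ∑ i, (plank (u i) (a i) (w i)).indicator f x := by
          apply setLIntegral_mono
          · exact Finset.measurable_sum _ fun i _ => hmeasf.indicator (hplank_meas i)
          · intro x hx
            have hx' : x ∈ ⋃ i, plank (u i) (a i) (w i) :=
              hcov (Metric.ball_subset_closedBall hx)
            obtain ⟨i, hi⟩ := Set.mem_iUnion.1 hx'
            calc f x = (plank (u i) (a i) (w i)).indicator f x :=
                  (Set.indicator_of_mem hi f).symm
              _ ≤ ∑ j, (plank (u j) (a j) (w j)).indicator f x :=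
                  Finset.single_le_sum (f := fun j => (plank (u j) (a j) (w j)).indicator f x)
                    (fun j _ => zero_le) (Finset.mem_univ i)
      _ = ∑ i, ∫⁻ x in Metric.ball c r, (plank (u i) (a i) (w i)).indicator f x :=
          lintegral_finset_sum _ fun i _ => hmeasf.indicator (hplank_meas i)
      _ = ∑ i, ∫⁻ x in Metric.ball c r ∩ plank (u i) (a i) (w i), f x := by
          refine Finset.sum_congr rfl fun i _ => ?_
          rw [lintegral_indicator (hplank_meas i), Measure.restrict_restrict (hplank_meas i),
            Set.inter_comm]
  -- each plank contributes at most π * w i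
  have hbound : ∀ i, ∫⁻ x in Metric.ball c r ∩ plank (u i) (a i) (w i), f x
      ≤ ENNReal.ofReal π * ENNReal.ofReal (w i) := by
    intro i
    rw [moese_core c r hr (u i) (hu i) (a i) (w i)]
    apply mul_le_mul_right
    calc volume (Icc (a i - (inner ℝ c (u i) : ℝ)) (a i + w i - (inner ℝ c (u i) : ℝ)) ∩ Ioo (-r) r)
        ≤ volume (Icc (a i - (inner ℝ c (u i) : ℝ)) (a i + w i - (inner ℝ c (u i) : ℝ))) :=
          measure_mono Set.inter_subset_left
      _ = ENNReal.ofReal (w i) := by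
          rw [Real.volume_Icc]
          congr 1
          ring
  -- combine
  have hchain : ENNReal.ofReal π * ENNReal.ofReal (2*r)
      ≤ ENNReal.ofReal π * ENNReal.ofReal (∑ i, w i) := by
    calc ENNReal.ofReal π * ENNReal.ofReal (2*r)
        = ∫⁻ x in Metric.ball c r, f x := htotal.symm
      _ ≤ ∑ i, ∫⁻ x in Metric.ball c r ∩ plank (u i) (a i) (w i), f x := hsplit
      _ ≤ ∑ i, ENNReal.ofReal π * ENNReal.ofReal (w i) := Finset.sum_le_sum fun i _ => hbound i
      _ = ENNReal.ofReal π * ∑ i, ENNReal.ofReal (w i) := by rw [Finset.mul_sum]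
      _ = ENNReal.ofReal π * ENNReal.ofReal (∑ i, w i) := by
          rw [← ENNReal.ofReal_sum_of_nonneg fun i _ => hw i]
  have h2r : ENNReal.ofReal (2*r) ≤ ENNReal.ofReal (∑ i, w i) :=
    (ENNReal.mul_le_mul_iff_right (by simp [ENNReal.ofReal_eq_zero]; linarith) ENNReal.ofReal_ne_top).1
      hchain
  have := (ENNReal.ofReal_le_ofReal_iff (Finset.sum_nonneg fun i _ => hw i)).1 h2r
  linarith
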